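/- (Transfer of the factorization identities to the combined realization, identity (are2)). Let (A_Ψ, B_Ψ, C_Ψ, D_Ψ) be filter matrices with nz+nw inputs, M = Mᵀ, and suppose (Z̃, M̃, C̃, D̃) satisfies the factorization identities for (A_Ψ, B_Ψ, C_Ψ, D_Ψ, M). Let (A, B, C, D) be system matrices, (𝒜, ℬ, 𝒞, 𝒟) the combined realization, and set 𝒵 := diag(Z̃, 0_{n×n}), 𝒞̃ := [C̃, D̃ C_F], 𝒟̃ := D̃ D_F. Then 𝒜ᵀ 𝒵 + 𝒵 𝒜 + 𝒞ᵀ M 𝒞 = 𝒞̃ᵀ M̃ 𝒞̃, 𝒵 ℬ + 𝒞ᵀ M 𝒟 = 𝒞̃ᵀ M̃ 𝒟̃, and 𝒟ᵀ M 𝒟 = 𝒟̃ᵀ M̃ 𝒟̃; equivalently, KYP(𝒵, M; 𝒜, ℬ, 𝒞, 𝒟) = [𝒞̃, 𝒟̃]ᵀ M̃ [𝒞̃, 𝒟̃]. -/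

import Mathlib

open MeasureTheory Matrix

noncomputable section

namespace IQCPaper

/-- Membership in `L2e^p`: measurable and square integrable on every bounded interval. -/
def MemL2e (p : ℕ) (f : ℝ → Fin p → ℝ) : Prop :=
  Measurable f ∧ ∀ T : ℝ, 0 < T → IntegrableOn (fun t => ‖f t‖ ^ 2) (Set.Ioc 0 T) volume

/-- Membership in `L2^p`. -/
def MemL2 (p : ℕ) (f : ℝ → Fin p → ℝ) : Prop :=
  MemL2e p f ∧ IntegrableOn (fun t => ‖f t‖ ^ 2) (Set.Ioi 0) volume

/-- The `L2` norm on `[0,∞)`. -/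
def L2norm (p : ℕ) (f : ℝ → Fin p → ℝ) : ℝ :=
  Real.sqrt (∫ t in Set.Ioi (0 : ℝ), ‖f t‖ ^ 2)

/-- The filter trajectory: absolutely continuous solution of
`ξ' = A ξ + B u`, `ξ(0) = 0`, written in integral form. -/
def IsFilterTraj {k m : Type*} [Fintype k] [Fintype m]
    (A : Matrix k k ℝ) (B : Matrix k m ℝ)
    (u : ℝ → m → ℝ) (ξ : ℝ → k → ℝ) : Prop :=
  Continuous ξ ∧ ξ 0 = 0 ∧
    ∀ t : ℝ, 0 ≤ t → ξ t = ∫ s in (0 : ℝ)..t, (A.mulVec (ξ s) + B.mulVec (u s))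

/-- The KYP matrix. -/
def KYP {n m q : Type*} [Fintype n] [Fintype m] [Fintype q]
    (X : Matrix n n ℝ) (M : Matrix q q ℝ)
    (A : Matrix n n ℝ) (B : Matrix n m ℝ)
    (C : Matrix q n ℝ) (D : Matrix q m ℝ) : Matrix (n ⊕ m) (n ⊕ m) ℝ :=
  fromBlocks (Aᵀ * X + X * A + Cᵀ * M * C) (X * B + Cᵀ * M * D)
    (Bᵀ * X + Dᵀ * M * C) (Dᵀ * M * D)

/-- A real square matrix is Hurwitz if all its complex eigenvalues have negative real part. -/
def IsHurwitz {n : Type*} [Fintype n] [DecidableEq n] (A : Matrix n n ℝ) : Prop :=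
  ∀ μ ∈ spectrum ℂ (A.map Complex.ofReal), μ.re < 0

/-- Finite-horizon IQC with terminal cost matrix `Z`. -/
def FiniteHorizonIQC {k q : Type*} [Fintype k] [Fintype q] (nz nw : ℕ)
    (AΨ : Matrix k k ℝ) (BΨ : Matrix k (Fin nz ⊕ Fin nw) ℝ)
    (CΨ : Matrix q k ℝ) (DΨ : Matrix q (Fin nz ⊕ Fin nw) ℝ)
    (M : Matrix q q ℝ) (Z : Matrix k k ℝ)
    (Δ : (ℝ → Fin nz → ℝ) → (ℝ → Fin nw → ℝ)) : Prop :=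
  ∀ z : ℝ → Fin nz → ℝ, MemL2e nz z →
    ∀ ξ : ℝ → k → ℝ,
      IsFilterTraj AΨ BΨ (fun t => Sum.elim (z t) (Δ z t)) ξ →
      ∀ T : ℝ, 0 < T →
        0 ≤ (∫ t in (0 : ℝ)..T,
              (CΨ.mulVec (ξ t) + DΨ.mulVec (Sum.elim (z t) (Δ z t))) ⬝ᵥ
                M.mulVec (CΨ.mulVec (ξ t) + DΨ.mulVec (Sum.elim (z t) (Δ z t))))
            + (ξ T) ⬝ᵥ Z.mulVec (ξ T)

/-- Factorization identities for `(Z̃, M̃, C̃, D̃)`. -/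
def FactIds {k m q : Type*} [Fintype k] [Fintype m] [Fintype q]
    (AΨ : Matrix k k ℝ) (BΨ : Matrix k m ℝ) (CΨ : Matrix q k ℝ) (DΨ : Matrix q m ℝ)
    (M : Matrix q q ℝ) (Z' : Matrix k k ℝ) (M' : Matrix m m ℝ)
    (C' : Matrix m k ℝ) (D' : Matrix m m ℝ) : Prop :=
  Z'.IsSymm ∧ M'.IsSymm ∧
    AΨᵀ * Z' + Z' * AΨ + CΨᵀ * M * CΨ = C'ᵀ * M' * C' ∧
    Z' * BΨ + CΨᵀ * M * DΨ = C'ᵀ * M' * D' ∧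
    DΨᵀ * M * DΨ = D'ᵀ * M' * D'

/-- `(Z̃, M̃, C̃, D̃)` certifies a canonical factorization of `(AΨ, BΨ, CΨ, DΨ, M)`. -/
def CertifiesCanonical {k m q : Type*} [Fintype k] [Fintype m] [Fintype q]
    [DecidableEq k] [DecidableEq m]
    (AΨ : Matrix k k ℝ) (BΨ : Matrix k m ℝ) (CΨ : Matrix q k ℝ) (DΨ : Matrix q m ℝ)
    (M : Matrix q q ℝ) (Z' : Matrix k k ℝ) (M' : Matrix m m ℝ)
    (C' : Matrix m k ℝ) (D' : Matrix m m ℝ) : Prop :=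
  FactIds AΨ BΨ CΨ DΨ M Z' M' C' D' ∧ IsUnit D' ∧ IsHurwitz (AΨ - BΨ * D'⁻¹ * C')

/-- A causal operator. -/
def Causal (nz nw : ℕ) (Δ : (ℝ → Fin nz → ℝ) → (ℝ → Fin nw → ℝ)) : Prop :=
  ∀ z z' : ℝ → Fin nz → ℝ, ∀ T : ℝ, 0 < T →
    (∀ᵐ t ∂(volume.restrict (Set.Icc (0 : ℝ) T)), z t = z' t) →
    (∀ᵐ t ∂(volume.restrict (Set.Icc (0 : ℝ) T)), Δ z t = Δ z' t)

/-- A bounded operator from `L2^{nz}` to `L2^{nw}`. -/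
def BoundedOp (nz nw : ℕ) (Δ : (ℝ → Fin nz → ℝ) → (ℝ → Fin nw → ℝ)) : Prop :=
  ∃ c : ℝ, 0 ≤ c ∧ ∀ z, MemL2 nz z → MemL2 nw (Δ z) ∧ L2norm nw (Δ z) ≤ c * L2norm nz z


/-- The stacked matrix `C_F = [C; 0]`. -/
def CFmat {n nw nz : ℕ} (C : Matrix (Fin nz) (Fin n) ℝ) :
    Matrix (Fin nz ⊕ Fin nw) (Fin n) ℝ :=
  fromRows C 0

/-- The stacked matrix `D_F = [D; I]`. -/
def DFmat {nw nz : ℕ} (D : Matrix (Fin nz) (Fin nw) ℝ) :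
    Matrix (Fin nz ⊕ Fin nw) (Fin nw) ℝ :=
  fromRows D 1


section Helpers
variable {R : Type*} [CommRing R] {p a b a' b' w : Type*}
  [Fintype p] [Fintype a] [Fintype b] [Fintype a'] [Fintype b'] [Fintype w]

lemma conj_fromCols (X : Matrix p a R) (Y : Matrix p b R) (N : Matrix p p R)
    (X' : Matrix p a' R) (Y' : Matrix p b' R) :
    (fromCols X Y)ᵀ * N * fromCols X' Y'
      = fromBlocks (Xᵀ * N * X') (Xᵀ * N * Y') (Yᵀ * N * X') (Yᵀ * N * Y') := by
  rw [Matrix.transpose_fromCols, Matrix.fromRows_mul, Matrix.fromRows_mul_fromCols]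

lemma fromCols_T_mul (X : Matrix p a R) (Y : Matrix p b R) (N : Matrix p p R)
    (W : Matrix p w R) :
    (fromCols X Y)ᵀ * N * W = fromRows (Xᵀ * N * W) (Yᵀ * N * W) := by
  rw [Matrix.transpose_fromCols, Matrix.fromRows_mul, Matrix.fromRows_mul]

lemma fromRows_add' (X X' : Matrix a w R) (Y Y' : Matrix b w R) :
    fromRows X Y + fromRows X' Y' = fromRows (X + X') (Y + Y') := by
  ext (i | i) j <;> simp [Matrix.fromRows_apply_inl, Matrix.fromRows_apply_inr]

lemma fromRows_inj' {X X' : Matrix a w R} {Y Y' : Matrix b w R}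
    (h1 : X = X') (h2 : Y = Y') : fromRows X Y = fromRows X' Y' := by rw [h1, h2]

end Helpers

/-- Transfer of the factorization identities to the combined realization (identity (are2)). -/

theorem factorization_combined_realization
    {n nw nz k q : ℕ}
    (A : Matrix (Fin n) (Fin n) ℝ) (B : Matrix (Fin n) (Fin nw) ℝ)
    (C : Matrix (Fin nz) (Fin n) ℝ) (D : Matrix (Fin nz) (Fin nw) ℝ)
    (AΨ : Matrix (Fin k) (Fin k) ℝ) (BΨ : Matrix (Fin k) (Fin nz ⊕ Fin nw) ℝ)
    (CΨ : Matrix (Fin q) (Fin k) ℝ) (DΨ : Matrix (Fin q) (Fin nz ⊕ Fin nw) ℝ)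
    (M : Matrix (Fin q) (Fin q) ℝ) (hM : M.IsSymm)
    (Z' : Matrix (Fin k) (Fin k) ℝ)
    (M' : Matrix (Fin nz ⊕ Fin nw) (Fin nz ⊕ Fin nw) ℝ)
    (C' : Matrix (Fin nz ⊕ Fin nw) (Fin k) ℝ)
    (D' : Matrix (Fin nz ⊕ Fin nw) (Fin nz ⊕ Fin nw) ℝ)
    (hfact : FactIds AΨ BΨ CΨ DΨ M Z' M' C' D') :
    ((fromBlocks AΨ (BΨ * CFmat C) 0 A)ᵀ * (fromBlocks Z' 0 0 0)
          + (fromBlocks Z' 0 0 0) * (fromBlocks AΨ (BΨ * CFmat C) 0 A)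
          + (fromCols CΨ (DΨ * CFmat C))ᵀ * M * fromCols CΨ (DΨ * CFmat C)
        = (fromCols C' (D' * CFmat C))ᵀ * M' * fromCols C' (D' * CFmat C))
      ∧ ((fromBlocks Z' 0 0 0) * fromRows (BΨ * DFmat D) B
            + (fromCols CΨ (DΨ * CFmat C))ᵀ * M * (DΨ * DFmat D)
          = (fromCols C' (D' * CFmat C))ᵀ * M' * (D' * DFmat D))
      ∧ ((DΨ * DFmat D)ᵀ * M * (DΨ * DFmat D) = (D' * DFmat D)ᵀ * M' * (D' * DFmat D))
      ∧ KYP (fromBlocks Z' 0 0 0) M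
            (fromBlocks AΨ (BΨ * CFmat C) 0 A)
            (fromRows (BΨ * DFmat D) B)
            (fromCols CΨ (DΨ * CFmat C))
            (DΨ * DFmat D)
          = (fromCols (fromCols C' (D' * CFmat C)) (D' * DFmat D))ᵀ * M'
              * fromCols (fromCols C' (D' * CFmat C)) (D' * DFmat D) := by
  obtain ⟨hZ, hM'', h1, h2, h3⟩ := hfact
  set F := CFmat (nw := nw) C with hF
  set G := DFmat (nz := nz) D with hG
  have h2t : BΨᵀ * Z' + DΨᵀ * M * CΨ = D'ᵀ * M' * C' := by
    have := congrArg Matrix.transpose h2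
    simpa [Matrix.transpose_add, Matrix.transpose_mul, hZ.eq, hM.eq, hM''.eq,
      Matrix.mul_assoc] using this
  have e1 : Z' * (BΨ * F) + CΨᵀ * M * (DΨ * F) = C'ᵀ * M' * (D' * F) := by
    have := congrArg (· * F) h2
    simpa [Matrix.add_mul, Matrix.mul_assoc] using this
  have e1t : (BΨ * F)ᵀ * Z' + (DΨ * F)ᵀ * M * CΨ = (D' * F)ᵀ * M' * C' := by
    have := congrArg (Fᵀ * ·) h2t
    simpa [Matrix.mul_add, Matrix.transpose_mul, Matrix.mul_assoc] using this
  have e2 : (DΨ * F)ᵀ * M * (DΨ * F) = (D' * F)ᵀ * M' * (D' * F) := by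
    have := congrArg (fun X => Fᵀ * X * F) h3
    simpa [Matrix.transpose_mul, Matrix.mul_assoc] using this
  have e3 : Z' * (BΨ * G) + CΨᵀ * M * (DΨ * G) = C'ᵀ * M' * (D' * G) := by
    have := congrArg (· * G) h2
    simpa [Matrix.add_mul, Matrix.mul_assoc] using this
  have e4 : (DΨ * F)ᵀ * M * (DΨ * G) = (D' * F)ᵀ * M' * (D' * G) := by
    have := congrArg (fun X => Fᵀ * X * G) h3
    simpa [Matrix.transpose_mul, Matrix.mul_assoc] using this
  have e4t : (DΨ * G)ᵀ * M * (DΨ * F) = (D' * G)ᵀ * M' * (D' * F) := by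
    have := congrArg (fun X => Gᵀ * X * F) h3
    simpa [Matrix.transpose_mul, Matrix.mul_assoc] using this
  have e5 : (DΨ * G)ᵀ * M * (DΨ * G) = (D' * G)ᵀ * M' * (D' * G) := by
    have := congrArg (fun X => Gᵀ * X * G) h3
    simpa [Matrix.transpose_mul, Matrix.mul_assoc] using this
  have goal1 : (fromBlocks AΨ (BΨ * F) 0 A)ᵀ * (fromBlocks Z' 0 0 0)
          + (fromBlocks Z' 0 0 0) * (fromBlocks AΨ (BΨ * F) 0 A)
          + (fromCols CΨ (DΨ * F))ᵀ * M * fromCols CΨ (DΨ * F)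
        = (fromCols C' (D' * F))ᵀ * M' * fromCols C' (D' * F) := by
    rw [conj_fromCols, conj_fromCols]
    simp only [Matrix.fromBlocks_transpose, Matrix.fromBlocks_multiply,
      Matrix.fromBlocks_add, Matrix.transpose_zero, Matrix.mul_zero, Matrix.zero_mul,
      add_zero, zero_add]
    rw [Matrix.fromBlocks_inj]
    exact ⟨h1, e1, e1t, e2⟩
  have goal2 : (fromBlocks Z' 0 0 0) * fromRows (BΨ * G) B
            + (fromCols CΨ (DΨ * F))ᵀ * M * (DΨ * G)
          = (fromCols C' (D' * F))ᵀ * M' * (D' * G) := by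
    erw [fromCols_T_mul, fromCols_T_mul, Matrix.fromBlocks_mul_fromRows,
      fromRows_add']
    simp only [Matrix.mul_zero, Matrix.zero_mul, add_zero, zero_add]
    exact fromRows_inj' e3 e4
  refine ⟨goal1, goal2, e5, ?_⟩
  have goal2t : (fromRows (BΨ * G) B)ᵀ * (fromBlocks Z' 0 0 0)
      + (DΨ * G)ᵀ * M * fromCols CΨ (DΨ * F)
      = (D' * G)ᵀ * M' * fromCols C' (D' * F) := by
    have hZsymm : (fromBlocks Z' 0 0 (0 : Matrix (Fin n) (Fin n) ℝ))ᵀ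
        = fromBlocks Z' 0 0 (0 : Matrix (Fin n) (Fin n) ℝ) := by
      simp [Matrix.fromBlocks_transpose, hZ.eq]
    have := congrArg Matrix.transpose goal2
    erw [Matrix.transpose_add, Matrix.transpose_mul (fromBlocks Z' 0 0 0)] at this
    simp only [Matrix.transpose_add, Matrix.transpose_mul, Matrix.transpose_transpose,
      hZsymm, hM.eq, hM''.eq, Matrix.mul_assoc, transpose_fromCols, transpose_fromRows] at this ⊢
    exact this
  rw [KYP]; erw [goal1, goal2, goal2t, e5]
  exact (conj_fromCols _ _ M' _ _).symm

end IQCPaper
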